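/- Let K be a proper cone in a finite dimensional real inner product space V. A linear map L on V is a Z-transformation on K if and only if exp(−tL) maps K into K for every t ≥ 0. -/

import Mathlib

open scoped RealInnerProductSpace

variable {V : Type*}

/-- A proper cone: closed, convex, closed under nonnegative scaling, pointed,
with nonempty interior. -/
def IsProperCone [NormedAddCommGroup V] [InnerProductSpace ℝ V] (K : Set V) : Prop :=
  IsClosed K ∧ Convex ℝ K ∧ (∀ x ∈ K, ∀ t : ℝ, 0 ≤ t → t • x ∈ K) ∧
    (∀ x, x ∈ K → -x ∈ K → x = 0) ∧ (interior K).Nonempty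

/-- A Z-transformation relative to a proper cone `K` with dual cone `K*`:
`x ∈ K`, `y ∈ K*`, `⟪x,y⟫ = 0` imply `⟪L x, y⟫ ≤ 0`. -/
def IsZTransfDual [NormedAddCommGroup V] [InnerProductSpace ℝ V]
    (K : Set V) (L : V → V) : Prop :=
  ∀ x ∈ K, ∀ y ∈ {y : V | ∀ z ∈ K, 0 ≤ ⟪z, y⟫}, ⟪x, y⟫ = 0 → ⟪L x, y⟫ ≤ 0

open Metric Set Filter Topology

section Aux
variable [NormedAddCommGroup V] [InnerProductSpace ℝ V] [FiniteDimensional ℝ V]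

set_option linter.unusedSectionVars false

lemma hasDerivAt_expFlow (L : V →L[ℝ] V) (x : V) (t : ℝ) :
    HasDerivAt (fun s : ℝ => NormedSpace.exp (-(s • L)) x)
      (-(L (NormedSpace.exp (-(t • L)) x))) t := by
  have h := (hasDerivAt_exp_smul_const' (𝕂 := ℝ) (-L) t).clm_apply
      (hasDerivAt_const t x)
  simp only [smul_neg, ContinuousLinearMap.mul_apply, ContinuousLinearMap.neg_apply,
    map_zero, add_zero] at h
  exact h

lemma expFlow_zero (L : V →L[ℝ] V) (x : V) : NormedSpace.exp (-((0:ℝ) • L)) x = x := by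
  simp [NormedSpace.exp_zero]

lemma proj_facts (K : Set V) (hcl : IsClosed K) (hconv : Convex ℝ K)
    (hcone : ∀ x ∈ K, ∀ t : ℝ, 0 ≤ t → t • x ∈ K) (hne : K.Nonempty) (z : V) :
    ∃ p ∈ K, ‖z - p‖ = Metric.infDist z K ∧ (∀ v ∈ K, ⟪z - p, v⟫ ≤ 0) ∧ ⟪z - p, p⟫ = 0 := by
  obtain ⟨p, hp, hmin⟩ := exists_norm_eq_iInf_of_complete_convex hne hcl.isComplete hconv z
  have hdist : ‖z - p‖ = Metric.infDist z K := by
    rw [hmin, Metric.infDist_eq_iInf]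
    simp_rw [dist_eq_norm]
  have hvi := (norm_eq_iInf_iff_real_inner_le_zero hconv hp).1 hmin
  have hadd : ∀ v ∈ K, p + v ∈ K := by
    intro v hv
    have hm : (1/2 : ℝ) • p + (1/2 : ℝ) • v ∈ K :=
      hconv hp hv (by norm_num) (by norm_num) (by norm_num)
    have := hcone _ hm 2 (by norm_num)
    rwa [smul_add, smul_smul, smul_smul, show (2:ℝ) * (1/2) = 1 by norm_num, one_smul,
      one_smul] at this
  have hKle : ∀ v ∈ K, ⟪z - p, v⟫ ≤ 0 := by
    intro v hv
    have := hvi (p + v) (hadd v hv)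
    rwa [add_sub_cancel_left] at this
  refine ⟨p, hp, hdist, hKle, le_antisymm ?_ ?_⟩
  · have := hvi ((2:ℝ) • p) (hcone p hp 2 (by norm_num))
    rwa [two_smul, add_sub_cancel_left] at this
  · have h0 : (0:V) ∈ K := by simpa using hcone p hp 0 le_rfl
    have := hvi 0 h0
    rw [zero_sub, inner_neg_right] at this
    linarith

end Aux

/-- `L` is a Z-transformation on the proper cone `K` iff
`exp(-tL)` maps `K` into `K` for every `t ≥ 0`. -/
theorem stmt3 [NormedAddCommGroup V] [InnerProductSpace ℝ V] [FiniteDimensional ℝ V]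
    (K : Set V) (hK : IsProperCone K) (L : V →L[ℝ] V) :
    IsZTransfDual K (⇑L) ↔
      ∀ t : ℝ, 0 ≤ t → ∀ x ∈ K, NormedSpace.exp (-(t • L)) x ∈ K := by
  obtain ⟨hcl, hconv, hcone, -, hint⟩ := hK
  have hKne : K.Nonempty := hint.mono interior_subset
  constructor
  · intro hZ t ht x hx
    set u : ℝ → V := fun s => NormedSpace.exp (-(s • L)) x with hu
    have hud : ∀ s, HasDerivAt u (-(L (u s))) s := fun s => hasDerivAt_expFlow L x s
    have hucont : Continuous u := by
      rw [continuous_iff_continuousAt]; exact fun s => (hud s).continuousAt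
    set φ : ℝ → ℝ := fun s => (Metric.infDist (u s) K) ^ 2 with hφ
    have hφcont : Continuous φ := ((continuous_infDist_pt K).comp hucont).pow 2
    -- key pointwise estimate
    have key : ∀ s : ℝ, ∀ r : ℝ, 2 * ‖L‖ * φ s < r →
        ∃ᶠ z in 𝓝[>] s, (z - s)⁻¹ * (φ z - φ s) < r := by
      intro s r hr
      obtain ⟨p, hp, hdist, hKle, hpz⟩ := proj_facts K hcl hconv hcone hKne (u s)
      set y : V := u s - p with hy
      have hφs : φ s = ‖y‖ ^ 2 := by
        show Metric.infDist (u s) K ^ 2 = ‖y‖ ^ 2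
        rw [hdist]
      -- -y in dual cone
      have hyd : -y ∈ {y : V | ∀ z ∈ K, 0 ≤ ⟪z, y⟫} := by
        rw [Set.mem_setOf_eq]
        intro w hw
        rw [inner_neg_right, real_inner_comm]
        linarith [hKle w hw]
      have hpy : ⟪p, -y⟫ = 0 := by
        rw [inner_neg_right, real_inner_comm]; simp [hpz]
      have hZp : ⟪L p, -y⟫ ≤ 0 := hZ p hp (-y) hyd hpy
      -- derivative estimate
      have hderiv : ⟪-(L (u s)), y⟫ ≤ ‖L‖ * φ s := by
        have hus : u s = p + y := by rw [hy]; abel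
        have h1 : ⟪-(L (u s)), y⟫ = -⟪L p, y⟫ - ⟪L y, y⟫ := by
          rw [hus, map_add, inner_neg_left, inner_add_left]; ring
        have h2 : -⟪L p, y⟫ ≤ 0 := by rw [inner_neg_right] at hZp; linarith
        have h3 : -⟪L y, y⟫ ≤ ‖L‖ * φ s := by
          have := abs_real_inner_le_norm (L y) y
          have hLy : ‖L y‖ ≤ ‖L‖ * ‖y‖ := L.le_opNorm y
          have : -⟪L y, y⟫ ≤ ‖L y‖ * ‖y‖ := by
            have := neg_abs_le ⟪L y, y⟫
            nlinarith [abs_real_inner_le_norm (L y) y]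
          calc -⟪L y, y⟫ ≤ ‖L y‖ * ‖y‖ := this
            _ ≤ ‖L‖ * ‖y‖ * ‖y‖ := by nlinarith [norm_nonneg y, norm_nonneg (L y), L.le_opNorm y, norm_nonneg L]
            _ = ‖L‖ * φ s := by rw [hφs]; ring
        linarith
      -- ψ and its derivative
      set ψ : ℝ → ℝ := fun z => ⟪u z - p, u z - p⟫ with hψ
      have hψd : HasDerivAt ψ (⟪u s - p, -(L (u s))⟫ + ⟪-(L (u s)), u s - p⟫) s :=
        HasDerivAt.inner ℝ ((hud s).sub_const p) ((hud s).sub_const p)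
      have hψd' : ⟪u s - p, -(L (u s))⟫ + ⟪-(L (u s)), u s - p⟫ < r := by
        have hc : ⟪u s - p, -(L (u s))⟫ = ⟪-(L (u s)), u s - p⟫ := real_inner_comm _ _
        have h2 : ⟪-(L (u s)), u s - p⟫ ≤ ‖L‖ * φ s := hderiv
        linarith
      have hψslope : ∀ᶠ z in 𝓝[>] s, slope ψ s z < r := by
        have h1 : HasDerivWithinAt ψ (⟪u s - p, -(L (u s))⟫ + ⟪-(L (u s)), u s - p⟫) (Ioi s) s :=
          hψd.hasDerivWithinAt
        rw [hasDerivWithinAt_iff_tendsto_slope' (notMem_Ioi.2 le_rfl)] at h1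
        exact h1.eventually_lt_const hψd'
      refine (hψslope.mp (eventually_mem_nhdsWithin.mono ?_)).frequently
      intro z hz hlt
      have hzs : 0 < z - s := sub_pos.2 hz
      have hφψ : φ z ≤ ψ z := by
        have h1 : Metric.infDist (u z) K ≤ ‖u z - p‖ := by
          simpa [dist_eq_norm] using Metric.infDist_le_dist_of_mem (x := u z) hp
        have h2 : (0:ℝ) ≤ Metric.infDist (u z) K := Metric.infDist_nonneg
        have h3 : ψ z = ‖u z - p‖ ^ 2 := by
          show ⟪u z - p, u z - p⟫ = ‖u z - p‖ ^ 2
          rw [real_inner_self_eq_norm_sq]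
        rw [h3]
        show Metric.infDist (u z) K ^ 2 ≤ ‖u z - p‖ ^ 2
        nlinarith
      have hφψs : φ s = ψ s := by
        show φ s = ⟪u s - p, u s - p⟫
        rw [real_inner_self_eq_norm_sq, ← hy]
        exact hφs
      rw [slope_def_field] at hlt
      have hslope2 : (z - s)⁻¹ * (ψ z - ψ s) < r := by
        rw [div_eq_inv_mul] at hlt; exact hlt
      have hmono : (z - s)⁻¹ * (φ z - φ s) ≤ (z - s)⁻¹ * (ψ z - ψ s) :=
        mul_le_mul_of_nonneg_left (by linarith) (le_of_lt (inv_pos.2 hzs))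
      linarith
      -- end key
    have hφ0 : φ 0 = 0 := by
      rw [hφ]; simp only [hu]
      rw [expFlow_zero, Metric.infDist_zero_of_mem hx]
      norm_num
    have hgr := le_gronwallBound_of_liminf_deriv_right_le (f := φ)
      (f' := fun s => 2 * ‖L‖ * φ s) (δ := 0) (K := 2 * ‖L‖) (ε := 0) (a := 0) (b := t)
      hφcont.continuousOn (fun s _ r hr => key s r hr) (le_of_eq hφ0)
      (fun s _ => by simp)
    have := hgr t ⟨ht, le_rfl⟩
    rw [gronwallBound_ε0_δ0] at this
    have hφt : φ t = 0 := le_antisymm this (by positivity)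
    have : Metric.infDist (u t) K = 0 := by
      have := sq_eq_zero_iff.1 hφt
      exact this
    exact (hcl.mem_iff_infDist_zero hKne).2 this
  · intro hE x hx y hy hxy
    set f : ℝ → ℝ := fun s => ⟪NormedSpace.exp (-(s • L)) x, y⟫ with hf
    have hf0 : f 0 = 0 := by rw [hf]; simp only [expFlow_zero]; exact hxy
    have hfd : HasDerivAt f (⟪x, (0:V)⟫ + ⟪-(L x), y⟫) 0 := by
      have := HasDerivAt.inner ℝ (hasDerivAt_expFlow L x 0) (hasDerivAt_const (0:ℝ) y)
      simpa only [expFlow_zero] using this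
    have hfd' : HasDerivAt f (-⟪L x, y⟫) 0 := by
      simpa [inner_neg_left] using hfd
    have hnonneg : 0 ≤ -⟪L x, y⟫ := by
      have h1 : HasDerivWithinAt f (-⟪L x, y⟫) (Ioi 0) 0 := hfd'.hasDerivWithinAt
      rw [hasDerivWithinAt_iff_tendsto_slope' (notMem_Ioi.2 le_rfl)] at h1
      refine ge_of_tendsto h1 (eventually_mem_nhdsWithin.mono ?_)
      intro z hz
      rw [slope_def_field, hf0, sub_zero, sub_zero]
      have hfz : 0 ≤ f z := hy _ (hE z (le_of_lt hz) x hx)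
      exact div_nonneg hfz (le_of_lt hz)
    linarith
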